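/- For every local n-GNN A with L layers, every n-graph G, and every vertex v_r of G, the L-history of the root of the L-unravelling tree of G on v_r (computed with respect to A) equals the L-history of v_r in G. -/

import Mathlib

set_option maxHeartbeats 1000000

/-- An `n`-graph: a nonempty finite vertex set, a set of directed edges,
and `n` vertex colors. -/
structure NGraph (n : ℕ) where
  V : Type
  [fintypeV : Fintype V]
  [decEqV : DecidableEq V]
  nonemptyV : Nonempty V
  E : V → V → Bool
  U : Fin n → V → Bool

attribute [instance] NGraph.fintypeV NGraph.decEqV

/-- An `n`-GNN.  Layer `ℓ+1` (for `0 ≤ ℓ < L`) has activation function `act ℓ`,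
coefficient matrices `C ℓ`, `Aout ℓ`, `Ain ℓ`, `R ℓ` and bias vector `b ℓ`. -/
structure GNN (n : ℕ) where
  L : ℕ
  Lpos : 0 < L
  d : ℕ → ℕ
  d0 : d 0 = n
  dpos : ∀ ℓ, 0 < d ℓ
  act : ℕ → ℚ → ℚ
  C : (ℓ : ℕ) → Matrix (Fin (d (ℓ+1))) (Fin (d ℓ)) ℚ
  Aout : (ℓ : ℕ) → Matrix (Fin (d (ℓ+1))) (Fin (d ℓ)) ℚ
  Ain : (ℓ : ℕ) → Matrix (Fin (d (ℓ+1))) (Fin (d ℓ)) ℚ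
  R : (ℓ : ℕ) → Matrix (Fin (d (ℓ+1))) (Fin (d ℓ)) ℚ
  b : (ℓ : ℕ) → Fin (d (ℓ+1)) → ℚ

/-- The feature maps `ξ⁽ℓ⁾` computed by a GNN on an `n`-graph. -/
def GNN.feat {n : ℕ} (A : GNN n) (G : NGraph n) : (ℓ : ℕ) → G.V → (Fin (A.d ℓ) → ℚ)
  | 0 => fun v i => if G.U (Fin.cast A.d0 i) v then 1 else 0
  | ℓ+1 => fun v i =>
      A.act ℓ
        ((A.C ℓ).mulVec (A.feat G ℓ v) i
          + (A.Aout ℓ).mulVec (∑ u ∈ Finset.univ.filter (fun u => G.E v u), A.feat G ℓ u) i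
          + (A.Ain ℓ).mulVec (∑ u ∈ Finset.univ.filter (fun u => G.E u v), A.feat G ℓ u) i
          + (A.R ℓ).mulVec (∑ u, A.feat G ℓ u) i
          + A.b ℓ i)

/-- A GNN accepts `(G, v)` if the first entry of the final feature vector is `≥ 1/2`. -/
def GNN.accepts {n : ℕ} (A : GNN n) (G : NGraph n) (v : G.V) : Prop :=
  1/2 ≤ A.feat G A.L v ⟨0, A.dpos A.L⟩

/-- A GNN is satisfiable if it accepts some node of some graph. -/
def GNN.Satisfiable {n : ℕ} (A : GNN n) : Prop :=
  ∃ (G : NGraph n) (v : G.V), A.accepts G v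

/-- A GNN is universally satisfiable if it accepts every node of some graph. -/
def GNN.UnivSatisfiable {n : ℕ} (A : GNN n) : Prop :=
  ∃ G : NGraph n, ∀ v : G.V, A.accepts G v

/-- A GNN is local if all its global-readout matrices are zero. -/
def GNN.IsLocal {n : ℕ} (A : GNN n) : Prop := ∀ ℓ < A.L, A.R ℓ = 0

/-- A GNN is outgoing-only if all its incoming-aggregation matrices are zero. -/
def GNN.IsOutgoingOnly {n : ℕ} (A : GNN n) : Prop := ∀ ℓ < A.L, A.Ain ℓ = 0

/-- A function is eventually constant if it is constant below some left threshold
and constant above some right threshold. -/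
def EventuallyConstant (f : ℚ → ℚ) : Prop :=
  ∃ tl tr : ℚ, tl < tr ∧ (∀ x ≤ tl, f x = f tl) ∧ (∀ x ≥ tr, f x = f tr)

/-- The truncated ReLU. -/
def trReLU (x : ℚ) : ℚ := min (max x 0) 1

/-- The standard ReLU. -/
def ReLU (x : ℚ) : ℚ := max x 0

/-- The `ℓ`-spectrum of a GNN: all values of the `ℓ`-th feature map over all
`n`-graphs and vertices. -/
def GNN.spectrum {n : ℕ} (A : GNN n) (ℓ : ℕ) : Set (Fin (A.d ℓ) → ℚ) :=
  { s | ∃ (G : NGraph n) (v : G.V), A.feat G ℓ v = s }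
/-- One step of a path: `(true, u)` means a forward edge to `u`, `(false, u)`
means a backward edge to `u`. -/
def stepOK {n : ℕ} (G : NGraph n) (a : G.V) (s : Bool × G.V) : Bool :=
  if s.1 then G.E a s.2 else G.E s.2 a

/-- `isPath G v p` holds if `p` is a valid path in `G` with source `v`. -/
def isPath {n : ℕ} (G : NGraph n) : G.V → List (Bool × G.V) → Bool
  | _, [] => true
  | v, s :: rest => stepOK G v s && isPath G s.2 rest

/-- `isProper G v p` holds if the path has no contiguous subsequence of the
form `v ← u → v` or `v → u ← v`. -/
def isProper {n : ℕ} (G : NGraph n) : G.V → List (Bool × G.V) → Bool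
  | _, [] => true
  | _, [_] => true
  | v, s1 :: s2 :: rest =>
      (!(decide (s2.2 = v) && decide (s1.1 ≠ s2.1))) &&
        isProper G s1.2 (s2 :: rest)

/-- The destination of a path with source `v`. -/
def pathDest {n : ℕ} (G : NGraph n) (v : G.V) (p : List (Bool × G.V)) : G.V :=
  (p.map Prod.snd).getLastD v

/-- Vertices of the `L`-unravelling tree of `G` on `v0`: proper paths in `G`
with source `v0` and length at most `L`. -/
def UnravelV {n : ℕ} (G : NGraph n) (v0 : G.V) (L : ℕ) : Type :=
  {p : List (Bool × G.V) //
    p.length ≤ L ∧ isPath G v0 p = true ∧ isProper G v0 p = true}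

noncomputable instance {n : ℕ} (G : NGraph n) (v0 : G.V) (L : ℕ) :
    Fintype (UnravelV G v0 L) :=
  @Fintype.ofFinite _
    (Set.Finite.to_subtype
      ((List.finite_length_le (Bool × G.V) L).subset fun _ hp => hp.1))

instance {n : ℕ} (G : NGraph n) (v0 : G.V) (L : ℕ) :
    DecidableEq (UnravelV G v0 L) :=
  fun p q => decidable_of_iff (p.1 = q.1) Subtype.ext_iff.symm

/-- The `L`-unravelling tree of `G` on `v0`, as an `n`-graph. -/
noncomputable def unravel {n : ℕ} (G : NGraph n) (v0 : G.V) (L : ℕ) :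
    NGraph n where
  V := UnravelV G v0 L
  nonemptyV := ⟨⟨[], Nat.zero_le _, rfl, rfl⟩⟩
  E := fun p q =>
    decide ((∃ u : G.V, q.1 = p.1 ++ [(true, u)]) ∨
      (∃ u : G.V, p.1 = q.1 ++ [(false, u)]))
  U := fun c p => G.U c (pathDest G v0 p.1)

/-- The root of the unravelling tree: the empty path. -/
noncomputable def unravelRoot {n : ℕ} (G : NGraph n) (v0 : G.V) (L : ℕ) :
    (unravel G v0 L).V :=
  ⟨[], Nat.zero_le _, rfl, rfl⟩

/-- The `ℓ`-history of a vertex: the tuple of its feature vectors at layers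
`0, …, ℓ`. -/
def GNN.hist {n : ℕ} (A : GNN n) (G : NGraph n) (ℓ : ℕ) (v : G.V) :
    (t : Fin (ℓ + 1)) → Fin (A.d t) → ℚ :=
  fun t => A.feat G t v

section UnravelAux

variable {n : ℕ} (G : NGraph n)

lemma pathDest_cons (v : G.V) (s : Bool × G.V) (p : List (Bool × G.V)) :
    pathDest G v (s :: p) = pathDest G s.2 p := by
  unfold pathDest
  rw [List.map_cons, List.getLastD_cons]

lemma pathDest_concat (v : G.V) (p : List (Bool × G.V)) (s : Bool × G.V) :
    pathDest G v (p ++ [s]) = s.2 := by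
  simp [pathDest, List.getLastD_concat]

lemma isPath_concat (v : G.V) (p : List (Bool × G.V)) (s : Bool × G.V) :
    isPath G v (p ++ [s]) = (isPath G v p && stepOK G (pathDest G v p) s) := by
  induction p generalizing v with
  | nil => simp [isPath, pathDest, Bool.and_comm]
  | cons hd tl ih =>
      simp [isPath, ih hd.2, pathDest_cons, Bool.and_assoc]

/-- Whether appending step `s` to path `p` (from source `v`) keeps it proper. -/
def extOK (v : G.V) (p : List (Bool × G.V)) (s : Bool × G.V) : Bool :=
  match p.getLast? with
  | none => true
  | some s1 => !(decide (s.2 = pathDest G v p.dropLast) && decide (s1.1 ≠ s.1))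

lemma extOK_concat (v : G.V) (p : List (Bool × G.V)) (s1 s : Bool × G.V) :
    extOK G v (p ++ [s1]) s
      = !(decide (s.2 = pathDest G v p) && decide (s1.1 ≠ s.1)) := by
  simp [extOK, List.getLast?_concat, List.dropLast_concat]

lemma extOK_cons_cons (v : G.V) (hd b : Bool × G.V) (l : List (Bool × G.V))
    (s : Bool × G.V) : extOK G v (hd :: b :: l) s = extOK G hd.2 (b :: l) s := by
  simp [extOK, List.getLast?_cons_cons, pathDest_cons]

lemma isProper_concat (v : G.V) (p : List (Bool × G.V)) (s : Bool × G.V) :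
    isProper G v (p ++ [s]) = (isProper G v p && extOK G v p s) := by
  induction p generalizing v with
  | nil => simp [isProper, extOK]
  | cons hd tl ih =>
      cases tl with
      | nil => simp [isProper, extOK, pathDest]
      | cons b l =>
          have h1 : (hd :: b :: l) ++ [s] = hd :: ((b :: l) ++ [s]) := rfl
          have h2 : isProper G v (hd :: ((b :: l) ++ [s]))
              = ((!(decide (b.2 = v) && decide (hd.1 ≠ b.1)))
                  && isProper G hd.2 ((b :: l) ++ [s])) := rfl
          have h3 : isProper G v (hd :: b :: l)
              = ((!(decide (b.2 = v) && decide (hd.1 ≠ b.1)))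
                  && isProper G hd.2 (b :: l)) := rfl
          rw [h1, h2, ih, h3, extOK_cons_cons, Bool.and_assoc]

lemma treeE_iff {L : ℕ} (v0 : G.V) (p q : (unravel G v0 L).V) :
    (unravel G v0 L).E p q = true ↔
      (∃ u, q.1 = p.1 ++ [(true, u)]) ∨ (∃ u, p.1 = q.1 ++ [(false, u)]) := by
  simp [unravel]

lemma sum_step {n : ℕ} (A : GNN n) (G : NGraph n) (v0 : G.V) (ℓ : ℕ) (b : Bool)
    (IH : ∀ q : (unravel G v0 A.L).V, ℓ + q.1.length ≤ A.L →
      A.feat (unravel G v0 A.L) ℓ q = A.feat G ℓ (pathDest G v0 q.1))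
    (p : (unravel G v0 A.L).V) (hp : ℓ + 1 + p.1.length ≤ A.L) :
    ∑ q ∈ Finset.univ.filter (fun q : (unravel G v0 A.L).V =>
        (∃ u, q.1 = p.1 ++ [(b, u)]) ∨ (∃ u, p.1 = q.1 ++ [(!b, u)])),
      A.feat (unravel G v0 A.L) ℓ q
    = ∑ w ∈ Finset.univ.filter
        (fun w => stepOK G (pathDest G v0 p.1) (b, w) = true),
      A.feat G ℓ w := by
  refine Finset.sum_bij (fun q _ => pathDest G v0 q.1) ?_ ?_ ?_ ?_
  · -- maps into the target filter
    intro q hq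
    rw [Finset.mem_filter] at hq
    refine Finset.mem_filter.mpr ⟨Finset.mem_univ _, ?_⟩
    show stepOK G (pathDest G v0 p.1) (b, pathDest G v0 q.1) = true
    rcases hq.2 with ⟨u, hu⟩ | ⟨u, hu⟩
    · have hpath := q.2.2.1
      rw [hu, isPath_concat, Bool.and_eq_true] at hpath
      have hq' : pathDest G v0 q.1 = u := by rw [hu, pathDest_concat]
      rw [hq']
      exact hpath.2
    · have hpath := p.2.2.1
      rw [hu, isPath_concat, Bool.and_eq_true] at hpath
      have hd : pathDest G v0 p.1 = u := by rw [hu, pathDest_concat]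
      rw [hd]
      cases b <;> simpa [stepOK] using hpath.2
  · -- injective
    intro q1 hq1 q2 hq2 heq
    have heq' : pathDest G v0 q1.1 = pathDest G v0 q2.1 := heq
    rw [Finset.mem_filter] at hq1 hq2
    have key : ∀ q q' : (unravel G v0 A.L).V,
        (∃ u, q.1 = p.1 ++ [(b, u)]) → (∃ u, p.1 = q'.1 ++ [(!b, u)]) →
        pathDest G v0 q.1 = pathDest G v0 q'.1 → False := by
      intro q q' ⟨u, hu⟩ ⟨u', hu'⟩ hdd
      have hq1eq : q.1 = q'.1 ++ [(!b, u')] ++ [(b, u)] := by rw [hu, hu']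
      have hprop := q.2.2.2
      rw [hq1eq, isProper_concat, Bool.and_eq_true, extOK_concat] at hprop
      have hdq : pathDest G v0 q.1 = u := by rw [hu, pathDest_concat]
      have hdq' : u = pathDest G v0 q'.1 := by rw [← hdd, hdq]
      simp [hdq'] at hprop
    rcases hq1.2 with ⟨u1, hu1⟩ | ⟨u1, hu1⟩ <;>
      rcases hq2.2 with ⟨u2, hu2⟩ | ⟨u2, hu2⟩
    · apply Subtype.ext
      have h1 : pathDest G v0 q1.1 = u1 := by rw [hu1, pathDest_concat]
      have h2 : pathDest G v0 q2.1 = u2 := by rw [hu2, pathDest_concat]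
      have hu : u1 = u2 := by rw [← h1, ← h2, heq']
      rw [hu1, hu2, hu]
    · exact absurd heq' (fun h => key q1 q2 ⟨u1, hu1⟩ ⟨u2, hu2⟩ h)
    · exact absurd heq'.symm (fun h => key q2 q1 ⟨u2, hu2⟩ ⟨u1, hu1⟩ h)
    · apply Subtype.ext
      calc q1.1 = (q1.1 ++ [((!b), u1)]).dropLast := by
            rw [List.dropLast_concat]
        _ = (q2.1 ++ [((!b), u2)]).dropLast := by rw [← hu1, hu2]
        _ = q2.1 := List.dropLast_concat
  · -- surjective
    intro w hw
    rw [Finset.mem_filter] at hw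
    by_cases hc : ∃ x, p.1.getLast? = some (!b, x) ∧
        pathDest G v0 p.1.dropLast = w
    · obtain ⟨x, hlast, hdest⟩ := hc
      have hne : p.1 ≠ [] := by
        intro h; rw [h] at hlast; simp at hlast
      have hdecomp : p.1 = p.1.dropLast ++ [(!b, x)] := by
        conv_lhs => rw [← List.dropLast_append_getLast hne]
        rw [List.getLast?_eq_getLast hne] at hlast
        rw [Option.some_inj] at hlast
        rw [hlast]
      have hlen : p.1.dropLast.length ≤ A.L := by
        have := p.2.1
        have h2 : p.1.dropLast.length ≤ p.1.length := by
          rw [List.length_dropLast]; omega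
        omega
      have hpath : isPath G v0 p.1.dropLast = true := by
        have := p.2.2.1
        rw [hdecomp, isPath_concat, Bool.and_eq_true] at this
        exact this.1
      have hprop : isProper G v0 p.1.dropLast = true := by
        have := p.2.2.2
        rw [hdecomp, isProper_concat, Bool.and_eq_true] at this
        exact this.1
      refine ⟨⟨p.1.dropLast, hlen, hpath, hprop⟩,
        Finset.mem_filter.mpr ⟨Finset.mem_univ _, Or.inr ⟨x, hdecomp⟩⟩, hdest⟩
    · -- extension
      have hlen : (p.1 ++ [(b, w)]).length ≤ A.L := by
        rw [List.length_append]; simp; omega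
      have hpath : isPath G v0 (p.1 ++ [(b, w)]) = true := by
        rw [isPath_concat, Bool.and_eq_true]
        exact ⟨p.2.2.1, hw.2⟩
      have hprop : isProper G v0 (p.1 ++ [(b, w)]) = true := by
        rw [isProper_concat, Bool.and_eq_true]
        refine ⟨p.2.2.2, ?_⟩
        unfold extOK
        rcases hl : p.1.getLast? with _ | s1
        · rfl
        · simp only [Bool.not_eq_true']
          by_contra hcon
          rw [Bool.not_eq_false, Bool.and_eq_true, decide_eq_true_iff,
            decide_eq_true_iff] at hcon
          apply hc
          refine ⟨s1.2, ?_, hcon.1.symm⟩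
          rw [hl]
          congr 1
          have : s1.1 = !b := by
            cases hs1 : s1.1 <;> cases hb : b <;> simp_all
          rw [← this]
      refine ⟨⟨p.1 ++ [(b, w)], hlen, hpath, hprop⟩,
        Finset.mem_filter.mpr ⟨Finset.mem_univ _, Or.inl ⟨w, rfl⟩⟩, ?_⟩
      simp [pathDest_concat]
  · -- values agree
    intro q hq
    rw [Finset.mem_filter] at hq
    apply IH
    rcases hq.2 with ⟨u, hu⟩ | ⟨u, hu⟩
    · rw [hu, List.length_append]; simp; omega
    · have : p.1.length = q.1.length + 1 := by rw [hu]; simp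
      omega

lemma feat_unravel {n : ℕ} (A : GNN n) (hloc : A.IsLocal) (G : NGraph n)
    (v0 : G.V) :
    ∀ ℓ, ∀ p : (unravel G v0 A.L).V, ℓ + p.1.length ≤ A.L →
      A.feat (unravel G v0 A.L) ℓ p = A.feat G ℓ (pathDest G v0 p.1) := by
  intro ℓ
  induction ℓ with
  | zero =>
      intro p _
      funext i
      simp [GNN.feat, unravel]
      rfl
  | succ ℓ IH =>
      intro p hp
      have hIH : ∀ q : (unravel G v0 A.L).V, ℓ + q.1.length ≤ A.L →
          A.feat (unravel G v0 A.L) ℓ q = A.feat G ℓ (pathDest G v0 q.1) := IH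
      have hR : A.R ℓ = 0 := hloc ℓ (by omega)
      funext i
      show A.act ℓ _ = A.act ℓ _
      congr 1
      have hC : A.feat (unravel G v0 A.L) ℓ p = A.feat G ℓ (pathDest G v0 p.1) :=
        hIH p (by omega)
      have hout :
          ∑ q ∈ Finset.univ.filter (fun q => (unravel G v0 A.L).E p q),
            A.feat (unravel G v0 A.L) ℓ q
          = ∑ w ∈ Finset.univ.filter (fun w => G.E (pathDest G v0 p.1) w),
            A.feat G ℓ w := by
        have h1 : Finset.univ.filter (fun q => (unravel G v0 A.L).E p q)
            = Finset.univ.filter (fun q : (unravel G v0 A.L).V =>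
              (∃ u, q.1 = p.1 ++ [(true, u)]) ∨
              (∃ u, p.1 = q.1 ++ [(!true, u)])) := by
          apply Finset.filter_congr
          intro q _
          rw [show ((unravel G v0 A.L).E p q : Prop) ↔
              ((unravel G v0 A.L).E p q = true) from Iff.rfl, treeE_iff]
          simp
        have h2 : Finset.univ.filter (fun w => G.E (pathDest G v0 p.1) w)
            = Finset.univ.filter
              (fun w => stepOK G (pathDest G v0 p.1) (true, w) = true) := by
          apply Finset.filter_congr
          intro w _
          simp [stepOK]
        rw [h1, h2]
        exact sum_step A G v0 ℓ true hIH p (by omega)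
      have hin :
          ∑ q ∈ Finset.univ.filter (fun q => (unravel G v0 A.L).E q p),
            A.feat (unravel G v0 A.L) ℓ q
          = ∑ w ∈ Finset.univ.filter (fun w => G.E w (pathDest G v0 p.1)),
            A.feat G ℓ w := by
        have h1 : Finset.univ.filter (fun q => (unravel G v0 A.L).E q p)
            = Finset.univ.filter (fun q : (unravel G v0 A.L).V =>
              (∃ u, q.1 = p.1 ++ [(false, u)]) ∨
              (∃ u, p.1 = q.1 ++ [(!false, u)])) := by
          apply Finset.filter_congr
          intro q _
          rw [show ((unravel G v0 A.L).E q p : Prop) ↔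
              ((unravel G v0 A.L).E q p = true) from Iff.rfl, treeE_iff]
          simp [or_comm]
        have h2 : Finset.univ.filter (fun w => G.E w (pathDest G v0 p.1))
            = Finset.univ.filter
              (fun w => stepOK G (pathDest G v0 p.1) (false, w) = true) := by
          apply Finset.filter_congr
          intro w _
          simp [stepOK]
        rw [h1, h2]
        exact sum_step A G v0 ℓ false hIH p (by omega)
      rw [hC, hout, hin, hR]
      simp [Matrix.zero_mulVec]

end UnravelAux

/-- For every local `n`-GNN with `L` layers, every `n`-graph
`G`, and every vertex `v₀` of `G`, the `L`-history of the root of the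
`L`-unravelling tree of `G` on `v₀` equals the `L`-history of `v₀` in `G`. -/
theorem unravelling_preserves_history {n : ℕ} (A : GNN n) (hloc : A.IsLocal)
    (G : NGraph n) (v0 : G.V) :
    A.hist (unravel G v0 A.L) A.L (unravelRoot G v0 A.L) = A.hist G A.L v0 := by
  funext t
  show A.feat (unravel G v0 A.L) t (unravelRoot G v0 A.L) = A.feat G t v0
  have := feat_unravel A hloc G v0 t (unravelRoot G v0 A.L)
    (by simp [unravelRoot]; omega)
  simpa [unravelRoot, pathDest] using this
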